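/- arXiv:2406.07187 — 3 statements merged into one kernel-verified Lean document; each statement's English description precedes it below -/
import Mathlib

section
/- Let $d : \mathbb{N} \times \mathbb{N} \to \mathbb{R}$ be a symmetric distance function with $d_{i,j} \ge 1$ for all $i \ne j$, and let $k \ge 2$. Suppose $\lambda_1 > 0$ satisfies $(1/d_{i,j})^{\lambda_1} > \binom{k}{2} (1/d_{i',j'})^{\lambda_1}$ for every pair of distances with $d_{i,j} < d_{i',j'}$. Then for any two $k$-element subsets $S, S'$ of indices with $\min_{i<j, i,j \in S} d_{i,j} > \min_{i<j, i,j \in S'} d_{i,j}$, the objective value $\sum_{i<j, i,j\in S} (1/d_{i,j})^{\lambda_1}$ is strictly less than $\sum_{i<j, i,j\in S'} (1/d_{i,j})^{\lambda_1}$. Consequently, any minimizer of $E(S) = \sum_{i<j, i,j\in S} (1/d_{i,j})^{\lambda_1}$ over $k$-subsets maximizes the minimum pairwise distance. -/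
open Finset

/-- Pairs `(i, j)` with `i < j`, both in `S`. -/
def pairsOf (S : Finset ℕ) : Finset (ℕ × ℕ) :=
  (S ×ˢ S).filter (fun p => p.1 < p.2)

/-- The objective function `E₂(S) = ∑_{i<j, i,j ∈ S} (1/d i j)^λ₁`. -/
noncomputable def objFun (d : ℕ → ℕ → ℝ) (lam1 : ℝ) (S : Finset ℕ) : ℝ :=
  ∑ p ∈ pairsOf S, (1 / d p.1 p.2) ^ lam1

/-- The minimum pairwise distance over a subset `S`. -/
noncomputable def dmin (d : ℕ → ℕ → ℝ) (S : Finset ℕ) : ℝ :=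
  sInf {x : ℝ | ∃ i ∈ S, ∃ j ∈ S, i < j ∧ d i j = x}

lemma pairs_nonempty {S : Finset ℕ} (h : 2 ≤ S.card) : (pairsOf S).Nonempty := by
  obtain ⟨a, ha, b, hb, hab⟩ := Finset.one_lt_card.mp (show 1 < S.card by omega)
  rcases lt_or_gt_of_ne hab with h' | h'
  · exact ⟨(a, b), by simp [pairsOf, ha, hb, h']⟩
  · exact ⟨(b, a), by simp [pairsOf, ha, hb, h']⟩

lemma dmin_eq (d : ℕ → ℕ → ℝ) (S : Finset ℕ) (h : 2 ≤ S.card) :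
    dmin d S = ((pairsOf S).image (fun p => d p.1 p.2)).min'
      ((pairs_nonempty h).image _) := by
  have hset : {x : ℝ | ∃ i ∈ S, ∃ j ∈ S, i < j ∧ d i j = x}
      = ↑((pairsOf S).image (fun p => d p.1 p.2)) := by
    ext x
    simp only [Set.mem_setOf_eq, Finset.coe_image, Set.mem_image, Finset.mem_coe,
      pairsOf, Finset.mem_filter, Finset.mem_product]
    constructor
    · rintro ⟨i, hi, j, hj, hij, hx⟩; exact ⟨(i, j), ⟨⟨hi, hj⟩, hij⟩, hx⟩
    · rintro ⟨⟨i, j⟩, ⟨⟨hi, hj⟩, hij⟩, hx⟩; exact ⟨i, hi, j, hj, hij, hx⟩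
  rw [dmin, hset, Finset.Nonempty.csInf_eq_min']

lemma dmin_spec (d : ℕ → ℕ → ℝ) (S : Finset ℕ) (h : 2 ≤ S.card) :
    (∃ p ∈ pairsOf S, d p.1 p.2 = dmin d S) ∧
      ∀ q ∈ pairsOf S, dmin d S ≤ d q.1 q.2 := by
  rw [dmin_eq d S h]
  constructor
  · have := Finset.min'_mem ((pairsOf S).image (fun p => d p.1 p.2))
      ((pairs_nonempty h).image _)
    simpa [eq_comm] using Finset.mem_image.mp this
  · intro q hq
    exact Finset.min'_le _ _ (Finset.mem_image_of_mem _ hq)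

lemma card_pairsOf_le (S : Finset ℕ) : (pairsOf S).card ≤ S.card.choose 2 := by
  rw [← Finset.card_powersetCard 2 S]
  apply Finset.card_le_card_of_injOn (fun p => {p.1, p.2})
  · rintro ⟨a, b⟩ hp
    simp only [pairsOf, Finset.mem_coe, Finset.mem_filter, Finset.mem_product] at hp
    obtain ⟨⟨ha, hb⟩, hab⟩ := hp
    rw [Finset.mem_coe, Finset.mem_powersetCard]
    refine ⟨?_, ?_⟩
    · intro x hx
      simp only [Finset.mem_insert, Finset.mem_singleton] at hx
      rcases hx with h | h <;> subst h <;> assumption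
    · rw [Finset.card_insert_of_notMem (by simp; omega), Finset.card_singleton]
  · rintro ⟨a, b⟩ hp ⟨c, e⟩ hq h
    simp only [pairsOf, Finset.mem_coe, Finset.mem_filter, Finset.mem_product] at hp hq
    have h' : ({a, b} : Finset ℕ) = {c, e} := h
    have h1 : a ∈ ({c, e} : Finset ℕ) := by rw [← h']; simp
    have h2 : b ∈ ({c, e} : Finset ℕ) := by rw [← h']; simp
    have h3 : c ∈ ({a, b} : Finset ℕ) := by rw [h']; simp
    simp only [Finset.mem_insert, Finset.mem_singleton] at h1 h2 h3
    have := hp.2; have := hq.2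
    simp only [Prod.mk.injEq]
    omega

lemma key_lemma (d : ℕ → ℕ → ℝ) (k : ℕ) (lam1 : ℝ)
    (hd1 : ∀ i j, i ≠ j → 1 ≤ d i j)
    (hk : 2 ≤ k) (hlam1 : 0 < lam1)
    (hcond : ∀ i j i' j', i ≠ j → i' ≠ j' → d i j < d i' j' →
      (1 / d i j) ^ lam1 > (k.choose 2 : ℝ) * (1 / d i' j') ^ lam1)
    (S S' : Finset ℕ) (hS : S.card = k) (hS' : S'.card = k)
    (hlt : dmin d S' < dmin d S) : objFun d lam1 S < objFun d lam1 S' := by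
  have h2S : 2 ≤ S.card := hS ▸ hk
  have h2S' : 2 ≤ S'.card := hS' ▸ hk
  obtain ⟨⟨p, hp, hpd⟩, hle⟩ := dmin_spec d S h2S
  obtain ⟨⟨p', hp', hpd'⟩, _⟩ := dmin_spec d S' h2S'
  have hplt : p.1 < p.2 := (Finset.mem_filter.mp hp).2
  have hplt' : p'.1 < p'.2 := (Finset.mem_filter.mp hp').2
  have hd_min : (1:ℝ) ≤ dmin d S := hpd ▸ hd1 _ _ hplt.ne
  have hd_min' : (1:ℝ) ≤ dmin d S' := hpd' ▸ hd1 _ _ hplt'.ne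
  have hcondx := hcond p'.1 p'.2 p.1 p.2 hplt'.ne hplt.ne (by rw [hpd, hpd']; exact hlt)
  rw [hpd, hpd'] at hcondx
  have hub : objFun d lam1 S ≤ (k.choose 2 : ℝ) * (1 / dmin d S) ^ lam1 := by
    have h1 : objFun d lam1 S ≤ ∑ _q ∈ pairsOf S, (1 / dmin d S) ^ lam1 := by
      apply Finset.sum_le_sum
      intro q hq
      have hqlt : q.1 < q.2 := (Finset.mem_filter.mp hq).2
      have h1q : (1:ℝ) ≤ d q.1 q.2 := hd1 _ _ hqlt.ne
      apply Real.rpow_le_rpow (div_nonneg zero_le_one (by linarith)) ?_ hlam1.le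
      exact one_div_le_one_div_of_le (by linarith) (hle q hq)
    rw [Finset.sum_const, nsmul_eq_mul] at h1
    refine h1.trans (mul_le_mul_of_nonneg_right ?_
      (Real.rpow_nonneg (div_nonneg zero_le_one (by linarith)) _))
    exact_mod_cast (hS ▸ card_pairsOf_le S)
  have hlb : (1 / dmin d S') ^ lam1 ≤ objFun d lam1 S' := by
    rw [← hpd']
    apply Finset.single_le_sum (f := fun q => (1 / d q.1 q.2) ^ lam1) ?_ hp'
    intro q hq
    have hqlt : q.1 < q.2 := (Finset.mem_filter.mp hq).2
    have := hd1 q.1 q.2 hqlt.ne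
    exact Real.rpow_nonneg (div_nonneg zero_le_one (by linarith)) _
  linarith

theorem stmt_0 (d : ℕ → ℕ → ℝ) (k : ℕ) (lam1 : ℝ) (P : Finset ℕ)
    (hsymm : ∀ i j, d i j = d j i)
    (hd1 : ∀ i j, i ≠ j → 1 ≤ d i j)
    (hk : 2 ≤ k) (hlam1 : 0 < lam1)
    (hcond : ∀ i j i' j', i ≠ j → i' ≠ j' → d i j < d i' j' →
      (1 / d i j) ^ lam1 > (k.choose 2 : ℝ) * (1 / d i' j') ^ lam1) :
    (∀ S S' : Finset ℕ, S ⊆ P → S' ⊆ P → S.card = k → S'.card = k →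
      dmin d S' < dmin d S → objFun d lam1 S < objFun d lam1 S') ∧
    (∀ S : Finset ℕ, S ⊆ P → S.card = k →
      (∀ T : Finset ℕ, T ⊆ P → T.card = k → objFun d lam1 S ≤ objFun d lam1 T) →
      (∀ T : Finset ℕ, T ⊆ P → T.card = k → dmin d T ≤ dmin d S)) := by
  constructor
  · intro S S' _ _ hS hS' hlt
    exact key_lemma d k lam1 hd1 hk hlam1 hcond S S' hS hS' hlt
  · intro S hSP hS hmin T hTP hT
    by_contra hc
    push_neg at hc
    have h1 := key_lemma d k lam1 hd1 hk hlam1 hcond T S hT hS hc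
    have h2 := hmin T hTP hT
    linarith
end

section
/- For a natural number $r \ge 1$ and fixed $k \ge 1$, the function $f(\delta) = (1 + r\delta)^{-\lambda_1(\delta)}$, where $\lambda_1(\delta) = (\log(k(k+1)/2))/(\log(1+r\delta) - \log(1+(r-1)\delta))$, is monotonically decreasing in $\delta$ on $(0, \infty)$. -/
open Real Set

/-- Key inequality: for `0 ≤ u ≤ z`, `z(1+u)log(1+u) ≤ u(1+z)log(1+z)`. -/
lemma key_ineq (u z : ℝ) (hu : 0 ≤ u) (huz : u ≤ z) :
    z * (1 + u) * Real.log (1 + u) ≤ u * (1 + z) * Real.log (1 + z) := by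
  rcases eq_or_lt_of_le hu with h0 | h0
  · simp [← h0]
  · set h : ℝ → ℝ := fun t => u * ((1 + t) * Real.log (1 + t)) - t * ((1 + u) * Real.log (1 + u))
      with hh
    have hlog : ∀ t : ℝ, u ≤ t → HasDerivAt (fun s => Real.log (1 + s)) (1 / (1 + t)) t := by
      intro t ht
      have h1t : (1 : ℝ) + t ≠ 0 := by linarith
      simpa using (((hasDerivAt_id t).const_add 1).log h1t)
    have hderiv : ∀ t : ℝ, u ≤ t →
        HasDerivAt h (u * (Real.log (1 + t) + 1) - (1 + u) * Real.log (1 + u)) t := by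
      intro t ht
      have h1t : (1 : ℝ) + t > 0 := by linarith
      have hd1 : HasDerivAt (fun s => (1 + s) * Real.log (1 + s))
          (1 * Real.log (1 + t) + (1 + t) * (1 / (1 + t))) t :=
        (((hasDerivAt_id t).const_add 1)).mul (hlog t ht)
      have hd2 : HasDerivAt h
          (u * (1 * Real.log (1 + t) + (1 + t) * (1 / (1 + t))) - (1 + u) * Real.log (1 + u)) t := by
        have := (hd1.const_mul u).sub ((hasDerivAt_id t).mul_const ((1 + u) * Real.log (1 + u)))
        refine this.congr_deriv ?_
        ring
      convert hd2 using 1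
      field_simp
    have hmono : MonotoneOn h (Ici u) := by
      apply monotoneOn_of_deriv_nonneg (convex_Ici u)
      · exact fun t ht => ((hderiv t ht).continuousAt).continuousWithinAt
      · intro t ht
        rw [interior_Ici] at ht
        exact ((hderiv t (le_of_lt ht)).differentiableAt).differentiableWithinAt
      · intro t ht
        rw [interior_Ici] at ht
        have ht' : u < t := ht
        rw [(hderiv t (le_of_lt ht)).deriv]
        have hlu : Real.log (1 + u) ≤ u := by
          have := Real.log_le_sub_one_of_pos (x := 1 + u) (by linarith)
          linarith
        have hmonolog : Real.log (1 + u) ≤ Real.log (1 + t) :=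
          Real.log_le_log (by linarith) (by linarith)
        nlinarith
    have := hmono (self_mem_Ici) (mem_Ici.2 huz) huz
    simp only [hh, sub_self] at this
    nlinarith [this]

/-- Ratio monotonicity: `log(1+ct)/log(1+dt)` is monotone on `(0,∞)` when `0 ≤ c ≤ d`, `0 < d`. -/
lemma ratio_mono (c d : ℝ) (hc : 0 ≤ c) (hcd : c ≤ d) (hd : 0 < d) :
    MonotoneOn (fun t => Real.log (1 + c * t) / Real.log (1 + d * t)) (Ioi (0 : ℝ)) := by
  have hnec : ∀ t : ℝ, t ∈ Ioi (0:ℝ) → (1 : ℝ) + c * t ≠ 0 := by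
    intro t ht
    have ht' : (0:ℝ) < t := ht
    intro h; nlinarith
  have hned : ∀ t : ℝ, t ∈ Ioi (0:ℝ) → (1 : ℝ) + d * t ≠ 0 := by
    intro t ht
    have ht' : (0:ℝ) < t := ht
    intro h; nlinarith
  apply monotoneOn_of_deriv_nonneg (convex_Ioi 0)
  · apply ContinuousOn.div
    · exact ContinuousOn.log (by fun_prop) hnec
    · exact ContinuousOn.log (by fun_prop) hned
    · intro t ht
      have ht' : (0:ℝ) < t := ht
      exact ne_of_gt (Real.log_pos (by nlinarith))
  all_goals rw [interior_Ioi]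
  · intro t ht
    have ht' : (0:ℝ) < t := ht
    have h1 : (0 : ℝ) < 1 + c * t := by nlinarith
    have h2 : (1 : ℝ) < 1 + d * t := by nlinarith
    have hdc : HasDerivAt (fun s => Real.log (1 + c * s)) (c / (1 + c * t)) t := by
      simpa using (((hasDerivAt_id t).const_mul c).const_add 1).log (ne_of_gt h1)
    have hdd : HasDerivAt (fun s => Real.log (1 + d * s)) (d / (1 + d * t)) t := by
      simpa using (((hasDerivAt_id t).const_mul d).const_add 1).log (ne_of_gt (show (0:ℝ) < 1 + d * t by linarith))
    exact ((hdc.div hdd (ne_of_gt (Real.log_pos h2))).differentiableAt).differentiableWithinAt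
  · intro t ht
    have ht' : (0:ℝ) < t := ht
    have h1 : (0 : ℝ) < 1 + c * t := by nlinarith
    have h2 : (1 : ℝ) < 1 + d * t := by nlinarith
    have hdc : HasDerivAt (fun s => Real.log (1 + c * s)) (c / (1 + c * t)) t := by
      simpa using (((hasDerivAt_id t).const_mul c).const_add 1).log (ne_of_gt h1)
    have hdd : HasDerivAt (fun s => Real.log (1 + d * s)) (d / (1 + d * t)) t := by
      simpa using (((hasDerivAt_id t).const_mul d).const_add 1).log (ne_of_gt (show (0:ℝ) < 1 + d * t by linarith))
    rw [show (fun t => Real.log (1 + c * t) / Real.log (1 + d * t)) = (fun s => Real.log (1 + c * s)) / (fun s => Real.log (1 + d * s)) from rfl, (hdc.div hdd (ne_of_gt (Real.log_pos h2))).deriv]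
    apply div_nonneg _ (sq_nonneg _)
    rw [sub_nonneg]
    have h3 : (0 : ℝ) < 1 + d * t := by linarith
    have e1 : Real.log (1 + c * t) * (d / (1 + d * t))
        = (d * Real.log (1 + c * t)) / (1 + d * t) := by ring
    have e2 : c / (1 + c * t) * Real.log (1 + d * t)
        = (c * Real.log (1 + d * t)) / (1 + c * t) := by ring
    rw [e1, e2, div_le_div_iff₀ h3 h1]
    have hk := key_ineq (c * t) (d * t) (by positivity) (by nlinarith)
    have hlogc : 0 ≤ Real.log (1 + c * t) := Real.log_nonneg (by nlinarith)
    nlinarith [hk, ht', hlogc]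

theorem stmt_5 (r k : ℕ) (hr : 1 ≤ r) (hk : 1 ≤ k) :
    AntitoneOn
      (fun δ : ℝ =>
        (1 + r * δ) ^
          (-((Real.log (k * (k + 1) / 2)) /
            (Real.log (1 + r * δ) - Real.log (1 + ((r : ℝ) - 1) * δ)))))
      (Set.Ioi (0 : ℝ)) := by
  intro x hx y hy hxy
  have hx0 : (0:ℝ) < x := hx
  have hy0 : (0:ℝ) < y := hy
  have hr1 : (1 : ℝ) ≤ (r : ℝ) := by exact_mod_cast hr
  have hc0 : (0:ℝ) ≤ (r : ℝ) - 1 := by linarith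
  have hax : 0 < Real.log (1 + (r:ℝ) * x) := Real.log_pos (by nlinarith)
  have hay : 0 < Real.log (1 + (r:ℝ) * y) := Real.log_pos (by nlinarith)
  have hbx : 0 ≤ Real.log (1 + ((r:ℝ) - 1) * x) := Real.log_nonneg (by nlinarith)
  have hby : 0 ≤ Real.log (1 + ((r:ℝ) - 1) * y) := Real.log_nonneg (by nlinarith)
  have hbax : Real.log (1 + ((r:ℝ) - 1) * x) < Real.log (1 + (r:ℝ) * x) :=
    Real.log_lt_log (by nlinarith) (by nlinarith)
  have hbay : Real.log (1 + ((r:ℝ) - 1) * y) < Real.log (1 + (r:ℝ) * y) :=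
    Real.log_lt_log (by nlinarith) (by nlinarith)
  have hL0 : 0 ≤ Real.log ((k:ℝ) * ((k:ℝ) + 1) / 2) := by
    apply Real.log_nonneg
    have hk1 : (1 : ℝ) ≤ (k : ℝ) := by exact_mod_cast hk
    nlinarith
  have hratio := ratio_mono ((r:ℝ) - 1) (r:ℝ) hc0 (by linarith) (by linarith) hx hy hxy
  simp only at hratio ⊢
  rw [Real.rpow_def_of_pos (by nlinarith), Real.rpow_def_of_pos (by nlinarith)]
  apply Real.exp_le_exp.2
  set L := Real.log ((k:ℝ) * ((k:ℝ) + 1) / 2) with hLdef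
  set ax := Real.log (1 + (r:ℝ) * x) with haxdef
  set bx := Real.log (1 + ((r:ℝ) - 1) * x) with hbxdef
  set ay := Real.log (1 + (r:ℝ) * y) with haydef
  set by' := Real.log (1 + ((r:ℝ) - 1) * y) with hbydef
  have h1 : 0 < ax - bx := by linarith
  have h2 : 0 < ay - by' := by linarith
  rw [div_le_div_iff₀ hax hay] at hratio
  have hkey : L * (ax / (ax - bx)) ≤ L * (ay / (ay - by')) := by
    apply mul_le_mul_of_nonneg_left _ hL0
    rw [div_le_div_iff₀ h1 h2]
    nlinarith [hratio]
  calc ay * -(L / (ay - by')) = -(L * (ay / (ay - by'))) := by ring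
    _ ≤ -(L * (ax / (ax - bx))) := by linarith
    _ = ax * -(L / (ax - bx)) := by ring
end

section
/- Applying weight distribution followed by Dicke unitaries on each register produces the full Dicke state: for $0 \le l \le n$ and $0 \le m \le n$, $\binom{n}{l}^{-1/2} \sum_{i=0}^{l} \sqrt{\binom{m}{i}\binom{n-m}{l-i}}\, |D_{l-i}^{n-m}\rangle \otimes |D_i^m\rangle = |D_l^n\rangle$, where $|D_w^q\rangle$ is the uniform superposition of $q$-bit strings of Hamming weight $w$. -/
open Finset

/-- Hamming weight of a bit string. -/
def hammingWt {n : ℕ} (x : Fin n → Bool) : ℕ :=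
  (Finset.univ.filter (fun i => x i = true)).card

/-- The Dicke state `|D_w^q⟩`, as a vector indexed by the `2^q` basis states:
the uniform superposition of all `q`-bit strings of Hamming weight `w`. -/
noncomputable def dickeState (q w : ℕ) : (Fin q → Bool) → ℂ :=
  fun x => if hammingWt x = w then (1 / Real.sqrt (q.choose w) : ℝ) else 0

lemma hammingWt_le {n : ℕ} (x : Fin n → Bool) : hammingWt x ≤ n := by
  simpa [hammingWt] using (Finset.card_filter_le Finset.univ (fun i => x i = true)).trans
    (by simp)

lemma hammingWt_append {a b : ℕ} (x : Fin a → Bool) (y : Fin b → Bool) :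
    hammingWt (Fin.append x y) = hammingWt x + hammingWt y := by
  unfold hammingWt
  rw [Finset.card_filter, Finset.card_filter, Finset.card_filter, Fin.sum_univ_add]
  simp [Fin.append_left, Fin.append_right]

/-- With registers of `n - m` and `m` qubits (here `a = n - m`, `b = m`), applying the
weight distribution followed by Dicke unitaries on each register yields the full Dicke
state: componentwise, at the basis state obtained by concatenating `x` and `y`. -/
theorem stmt_12 (a b l : ℕ) (hl : l ≤ a + b)
    (x : Fin a → Bool) (y : Fin b → Bool) :
    ∑ i ∈ Finset.range (l + 1),
        (Real.sqrt ((b.choose i * a.choose (l - i) : ℕ) / ((a + b).choose l : ℝ)) : ℂ) *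
          dickeState a (l - i) x * dickeState b i y
      = dickeState (a + b) l (Fin.append x y) := by
  set wx := hammingWt x with hwx
  set wy := hammingWt y with hwy
  have hwa : wx ≤ a := hammingWt_le x
  have hwb : wy ≤ b := hammingWt_le y
  have happ : hammingWt (Fin.append x y) = wx + wy := hammingWt_append x y
  by_cases h : wx + wy = l
  · -- only term i = wy survives
    have hwyl : wy ≤ l := by omega
    have hmem : wy ∈ Finset.range (l + 1) := Finset.mem_range.mpr (by omega)
    rw [Finset.sum_eq_single_of_mem wy hmem]
    · have hlwy : l - wy = wx := by omega
      have hc1 : (0:ℝ) < a.choose wx := by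
        exact_mod_cast Nat.choose_pos hwa
      have hc2 : (0:ℝ) < b.choose wy := by
        exact_mod_cast Nat.choose_pos hwb
      have hc3 : (0:ℝ) < (a+b).choose l := by
        exact_mod_cast Nat.choose_pos hl
      simp only [dickeState, happ, h, hlwy, ← hwx, ← hwy, if_pos rfl, if_true]
      rw [← Complex.ofReal_mul, ← Complex.ofReal_mul]
      norm_cast
      push_cast
      rw [Real.sqrt_div' _ ?_, Real.sqrt_mul (by positivity)]
      · rw [div_mul_eq_mul_div, one_div, one_div]
        field_simp
      · positivity
    · intro i hi hne
      have : dickeState b i y = 0 := by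
        simp only [dickeState, hwy]
        rw [if_neg (Ne.symm hne)]
      simp [this]
  · -- every term vanishes, and RHS vanishes
    rw [Finset.sum_eq_zero]
    · simp only [dickeState, happ]
      rw [if_neg h]
    · intro i hi
      rcases eq_or_ne wy i with rfl | hne
      · have : wx ≠ l - wy := by
          have := Finset.mem_range.mp hi; omega
        simp only [dickeState, hwx]
        rw [if_neg this]
        simp
      · have : dickeState b i y = 0 := by
          simp only [dickeState, hwy]
          rw [if_neg hne]
        simp [this]
end
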